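/- The map φ : SL(2,ℂ) × U(1) → K defined by φ(s, μ) = diag(μs, μ(s†)⁻¹) (a block-diagonal 4×4 matrix) is a surjective group homomorphism onto K whose kernel is the two-element subgroup {(I₂, 1), (−I₂, −1)}. -/

import Mathlib

open Matrix Complex

noncomputable section

abbrev M2 : Type := Matrix (Fin 2) (Fin 2) ℂ
abbrev M4 : Type := Matrix (Fin 2 ⊕ Fin 2) (Fin 2 ⊕ Fin 2) ℂ

/-- `K = {diag(a, (a†)⁻¹) : a ∈ GL(2,ℂ), |det a| = 1}`. -/
def Kset : Set M4 :=
  {A | ∃ a : M2, IsUnit a ∧ ‖a.det‖ = 1 ∧ A = fromBlocks a 0 0 (aᴴ)⁻¹}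

/-- `φ(s, μ) = diag(μs, μ(s†)⁻¹)`. -/
def phiMap (s : M2) (μ : ℂ) : M4 := fromBlocks (μ • s) 0 0 (μ • (sᴴ)⁻¹)

lemma mySmulInv (k : ℂ) (hk : k ≠ 0) (A : M2) (h : IsUnit A.det) :
    (k • A)⁻¹ = k⁻¹ • A⁻¹ := by
  letI := invertibleOfNonzero hk
  rw [A.inv_smul k h, invOf_eq_inv]

lemma det_smul2 (k : ℂ) (A : M2) : (k • A).det = k ^ 2 * A.det := by
  rw [Matrix.det_smul]; norm_num

lemma conj_mul_self (μ : ℂ) (hμ : ‖μ‖ = 1) : μ * (starRingEnd ℂ) μ = 1 := by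
  rw [Complex.mul_conj]; norm_cast
  rw [← Complex.sq_norm, hμ]; norm_num

lemma conj_inv_eq (μ : ℂ) (hμ : ‖μ‖ = 1) : ((starRingEnd ℂ) μ)⁻¹ = μ :=
  inv_eq_of_mul_eq_one_right (by rw [mul_comm]; exact conj_mul_self μ hμ)

/-- `φ : SL(2,ℂ) × U(1) → K`, `φ(s,μ) = diag(μs, μ(s†)⁻¹)`, is a surjective
group homomorphism onto `K` with kernel `{(I₂,1), (−I₂,−1)}`. -/
theorem stmt6 :
    (∀ (s : M2) (μ : ℂ), s.det = 1 → ‖μ‖ = 1 → phiMap s μ ∈ Kset) ∧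
    (∀ (s t : M2) (μ ν : ℂ), s.det = 1 → t.det = 1 → ‖μ‖ = 1 → ‖ν‖ = 1 →
      phiMap (s * t) (μ * ν) = phiMap s μ * phiMap t ν) ∧
    (∀ A ∈ Kset, ∃ (s : M2) (μ : ℂ), s.det = 1 ∧ ‖μ‖ = 1 ∧ phiMap s μ = A) ∧
    (∀ (s : M2) (μ : ℂ), s.det = 1 → ‖μ‖ = 1 →
      (phiMap s μ = 1 ↔ (s = 1 ∧ μ = 1) ∨ (s = -1 ∧ μ = -1))) := by
  refine ⟨?_, ?_, ?_, ?_⟩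
  · rintro s μ hs hμ
    have hμ0 : μ ≠ 0 := by intro h; simp [h] at hμ
    refine ⟨μ • s, ?_, ?_, ?_⟩
    · apply (Matrix.isUnit_iff_isUnit_det _).mpr
      rw [det_smul2, hs, mul_one]
      exact (isUnit_iff_ne_zero.mpr (pow_ne_zero 2 hμ0))
    · rw [det_smul2, hs, mul_one, norm_pow, hμ]; norm_num
    · have hsH : IsUnit sᴴ.det := by
        rw [Matrix.det_conjTranspose, hs]; simp
      have hcμ : (starRingEnd ℂ) μ ≠ 0 := by simpa using hμ0
      have hD : (((μ • s)ᴴ : M2))⁻¹ = μ • (sᴴ)⁻¹ := by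
        rw [Matrix.conjTranspose_smul, Complex.star_def,
          mySmulInv _ hcμ _ hsH, conj_inv_eq μ hμ]
      rw [hD]; rfl
  · rintro s t μ ν hs ht hμ hν
    unfold phiMap
    rw [Matrix.fromBlocks_multiply]
    simp [Matrix.conjTranspose_mul, Matrix.mul_inv_rev, smul_smul, mul_comm,
      Matrix.smul_mul, Matrix.mul_smul]
  · rintro A ⟨a, ha, hdet, rfl⟩
    have hd0 : a.det ≠ 0 := by
      intro h
      have := (Matrix.isUnit_iff_isUnit_det a).mp ha
      rw [h] at this; simp at this
    have haH : IsUnit aᴴ.det := by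
      rw [Matrix.det_conjTranspose]
      exact isUnit_iff_ne_zero.mpr (by simpa using hd0)
    set μ : ℂ := Complex.exp (Complex.log a.det / 2) with hμdef
    have hμ0 : μ ≠ 0 := Complex.exp_ne_zero _
    have hμsq : μ * μ = a.det := by
      rw [hμdef, ← Complex.exp_add, add_halves]
      exact Complex.exp_log hd0
    have habs : ‖μ‖ = 1 := by
      rw [hμdef, Complex.norm_exp]
      have : (Complex.log a.det / 2).re = Real.log ‖a.det‖ / 2 := by
        simp [Complex.div_re, Complex.log_re]
      rw [this, hdet]
      simp
    refine ⟨μ⁻¹ • a, μ, ?_, habs, ?_⟩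
    · rw [det_smul2, inv_pow, sq, hμsq]
      field_simp
    · have hbA : μ • (μ⁻¹ • a) = a := by
        rw [smul_smul, mul_inv_cancel₀ hμ0, one_smul]
      have hbD : μ • (((μ⁻¹ • a)ᴴ : M2))⁻¹ = (aᴴ)⁻¹ := by
        rw [Matrix.conjTranspose_smul, Complex.star_def, map_inv₀,
          mySmulInv _ (inv_ne_zero (by simpa using hμ0)) _ haH, inv_inv, smul_smul,
          conj_mul_self μ habs, one_smul]
      unfold phiMap
      rw [hbA, hbD]
  · rintro s μ hs hμ
    constructor
    · intro h
      unfold phiMap at h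
      rw [← Matrix.fromBlocks_one] at h
      have h11 : μ • s = 1 := ((Matrix.fromBlocks_inj).mp h).1
      have hdet : μ * μ = 1 := by
        have := congrArg Matrix.det h11
        rwa [det_smul2, hs, mul_one, Matrix.det_one, sq] at this
      rcases mul_self_eq_one_iff.mp hdet with rfl | rfl
      · left; exact ⟨by simpa using h11, rfl⟩
      · right
        refine ⟨?_, rfl⟩
        have := congrArg (fun m : M2 => (-1 : ℂ) • m) h11
        simpa [smul_smul] using this
    · have hneg : ((-1 : M2))⁻¹ = -1 := Matrix.inv_eq_left_inv (by simp)
      rintro (⟨rfl, rfl⟩ | ⟨rfl, rfl⟩) <;>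
        simp [phiMap, ← Matrix.fromBlocks_one, hneg]
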